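/- For a symmetrically-normed ideal I of B(H) (with norm ‖·‖_I satisfying ‖AXB‖_I ≤ ‖A‖‖X‖_I‖B‖ and ‖X‖_I = ‖X‖ for rank-one X), a subset S ⊆ B(H) is bounded in the multiplier topology μ_I (generated by seminorms x ↦ ‖xk‖_I, k ∈ I) if and only if S is bounded in operator norm. -/

import Mathlib

open Filter Topology

/-- For a nonzero symmetrically-normed ideal `(I, ‖·‖_I)` of `B(H)` (with
`‖AXB‖_I ≤ ‖A‖‖X‖_I‖B‖` and `‖X‖_I = ‖X‖` for rank-one `X`), a subset `S ⊆ B(H)` is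
bounded in the multiplier topology `μ_I` — i.e. every seminorm `x ↦ ‖x k‖_I`, `k ∈ I`, is
bounded on `S` — if and only if `S` is bounded in operator norm. -/
theorem stmt18 {H : Type*} [NormedAddCommGroup H] [InnerProductSpace ℂ H]
    [CompleteSpace H] (I : Set (H →L[ℂ] H)) (NI : (H →L[ℂ] H) → ℝ)
    -- I is a nonzero two-sided ideal
    (hI0 : (0 : H →L[ℂ] H) ∈ I) (hIadd : ∀ S T : H →L[ℂ] H, S ∈ I → T ∈ I → S + T ∈ I)
    (hIneg : ∀ T : H →L[ℂ] H, T ∈ I → -T ∈ I)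
    (hIl : ∀ A T : H →L[ℂ] H, T ∈ I → A * T ∈ I)
    (hIr : ∀ A T : H →L[ℂ] H, T ∈ I → T * A ∈ I)
    (hInz : ∃ T ∈ I, T ≠ 0)
    -- NI is a symmetric norm on I, agreeing with the operator norm on rank-one operators
    (hNI0 : ∀ T ∈ I, 0 ≤ NI T) (hNIdef : ∀ T ∈ I, NI T = 0 → T = 0)
    (hNItri : ∀ S T : H →L[ℂ] H, S ∈ I → T ∈ I → NI (S + T) ≤ NI S + NI T)
    (hNIsmul : ∀ (c : ℂ), ∀ T ∈ I, NI (c • T) = ‖c‖ * NI T)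
    (hNIsym : ∀ A B : H →L[ℂ] H, ∀ X ∈ I, NI (A * X * B) ≤ ‖A‖ * NI X * ‖B‖)
    (hNIrk1 : ∀ X ∈ I, (∃ u v : H, X = (innerSL ℂ v).smulRight u) → NI X = ‖X‖)
    (S : Set (H →L[ℂ] H)) :
    (∀ k ∈ I, ∃ M : ℝ, ∀ x ∈ S, NI (x * k) ≤ M) ↔ ∃ M : ℝ, ∀ x ∈ S, ‖x‖ ≤ M := by
  constructor
  · intro h
    obtain ⟨T, hT, hTne⟩ := hInz
    obtain ⟨w, hw⟩ : ∃ w, T w ≠ 0 := by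
      by_contra hc
      push_neg at hc
      exact hTne (ContinuousLinearMap.ext fun x => by simp [hc x])
    set ζ := T w with hζ
    have hζn : ‖ζ‖ ≠ 0 := norm_ne_zero_iff.mpr hw
    -- every rank-one operator lies in I
    have hrk : ∀ ξ η : H, (innerSL ℂ η).smulRight ξ ∈ I := by
      intro ξ η
      have hmem : ((innerSL ℂ ζ).smulRight (((‖ζ‖ ^ 2 : ℝ) : ℂ)⁻¹ • ξ) * T)
          * ((innerSL ℂ η).smulRight w) ∈ I :=
        hIr _ _ (hIl _ T hT)
      have heq : ((innerSL ℂ ζ).smulRight (((‖ζ‖ ^ 2 : ℝ) : ℂ)⁻¹ • ξ) * T)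
          * ((innerSL ℂ η).smulRight w) = (innerSL ℂ η).smulRight ξ := by
        ext x
        simp only [ContinuousLinearMap.mul_apply, ContinuousLinearMap.smulRight_apply,
          innerSL_apply_apply, map_smul, inner_smul_right, smul_smul]
        rw [inner_self_eq_norm_sq_to_K (𝕜 := ℂ)]
        have : ((‖ζ‖ : ℂ) ^ 2)⁻¹ * ((‖ζ‖ : ℂ) ^ 2) = 1 := by
          apply inv_mul_cancel₀
          simpa using hζn
        push_cast
        ring_nf
        congr 1
        have h2 : ((‖ζ‖ : ℂ)) ^ 2 ≠ 0 := pow_ne_zero 2 (by exact_mod_cast hζn)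
        field_simp
        exact mul_div_cancel_right₀ _ h2
      rw [heq] at hmem
      exact hmem
    -- pointwise boundedness on S
    have hpt : ∀ ξ : H, ∃ M : ℝ, ∀ x ∈ S, ‖x ξ‖ ≤ M := by
      intro ξ
      set η : H := (‖ζ‖ : ℂ)⁻¹ • ζ with hη
      have hηnorm : ‖η‖ = 1 := by
        simp [hη, norm_smul, inv_mul_cancel₀ hζn]
      obtain ⟨M, hM⟩ := h _ (hrk ξ η)
      refine ⟨M, fun x hx => ?_⟩
      have hcomp : x * ((innerSL ℂ η).smulRight ξ) = (innerSL ℂ η).smulRight (x ξ) := by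
        ext y
        simp [ContinuousLinearMap.mul_apply, ContinuousLinearMap.smulRight_apply, map_smul]
      have hxk : x * ((innerSL ℂ η).smulRight ξ) ∈ I := hIl _ _ (hrk ξ η)
      have := hM x hx
      rw [hNIrk1 _ hxk ⟨x ξ, η, hcomp⟩, hcomp] at this
      calc ‖x ξ‖ = ‖innerSL ℂ η‖ * ‖x ξ‖ := by rw [innerSL_apply_norm, hηnorm, one_mul]
        _ = ‖(innerSL ℂ η).smulRight (x ξ)‖ := (ContinuousLinearMap.norm_smulRight_apply _ _).symm
        _ ≤ M := this
    -- Banach–Steinhaus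
    obtain ⟨C, hC⟩ := banach_steinhaus (ι := S) (g := fun i => (i : H →L[ℂ] H))
      (fun ξ => by
        obtain ⟨M, hM⟩ := hpt ξ
        exact ⟨M, fun i => hM i i.2⟩)
    exact ⟨C, fun x hx => hC ⟨x, hx⟩⟩
  · rintro ⟨M, hM⟩ k hk
    refine ⟨M * NI k, fun x hx => ?_⟩
    have h1 : x * k = x * k * 1 := by rw [mul_one]
    calc NI (x * k) = NI (x * k * 1) := by rw [← h1]
      _ ≤ ‖x‖ * NI k * ‖(1 : H →L[ℂ] H)‖ := hNIsym x 1 k hk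
      _ ≤ ‖x‖ * NI k * 1 := by
          apply mul_le_mul_of_nonneg_left (ContinuousLinearMap.norm_id_le)
          exact mul_nonneg (norm_nonneg x) (hNI0 k hk)
      _ = ‖x‖ * NI k := mul_one _
      _ ≤ M * NI k := mul_le_mul_of_nonneg_right (hM x hx) (hNI0 k hk)
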